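/- If G is dynamically ℓ-minimal in a hereditary graph class F and ℓ ≥ 5, then no two vertices of degree 2 in G are adjacent. -/

import Mathlib

open Finset

open scoped Classical in
noncomputable def deg {V : Type*} [Fintype V] (G : SimpleGraph V) (v : V) : ℕ :=
  (Finset.univ.filter (fun u => G.Adj v u)).card

def IsProper {V : Type*} (G : SimpleGraph V) (c : V → ℕ) : Prop :=
  ∀ u v, G.Adj u v → c u ≠ c v

def IsDynamic {V : Type*} [Fintype V] (G : SimpleGraph V) (c : V → ℕ) : Prop :=
  IsProper G c ∧ ∀ v, 2 ≤ deg G v → ∃ a b, G.Adj v a ∧ G.Adj v b ∧ c a ≠ c b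

noncomputable def chrom {V : Type*} (G : SimpleGraph V) : ℕ :=
  sInf {n | ∃ c : V → ℕ, (∀ v, c v < n) ∧ IsProper G c}

noncomputable def dynChrom {V : Type*} [Fintype V] (G : SimpleGraph V) : ℕ :=
  sInf {n | ∃ c : V → ℕ, (∀ v, c v < n) ∧ IsDynamic G c}

def subdiv {V : Type*} (G : SimpleGraph V) : SimpleGraph (V ⊕ G.edgeSet) where
  Adj x y :=
    match x, y with
    | Sum.inl u, Sum.inr e => u ∈ (e : Sym2 V)
    | Sum.inr e, Sum.inl u => u ∈ (e : Sym2 V)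
    | _, _ => False
  symm := ⟨by rintro (u | e) (v | f) h <;> first | exact h | exact h.elim⟩
  loopless := ⟨by rintro (u | e) h <;> exact h⟩

noncomputable instance {V : Type*} [Fintype V] (G : SimpleGraph V) : Fintype G.edgeSet :=
  Fintype.ofFinite _

def Choosable {V : Type*} (G : SimpleGraph V) (ℓ : ℕ) : Prop :=
  ∀ L : V → Finset ℕ, (∀ v, (L v).card = ℓ) →
    ∃ c : V → ℕ, (∀ v, c v ∈ L v) ∧ IsProper G c

def DynChoosable {V : Type*} [Fintype V] (G : SimpleGraph V) (ℓ : ℕ) : Prop :=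
  ∀ L : V → Finset ℕ, (∀ v, (L v).card = ℓ) →
    ∃ c : V → ℕ, (∀ v, c v ∈ L v) ∧ IsDynamic G c

noncomputable def listChrom {V : Type*} (G : SimpleGraph V) : ℕ :=
  sInf {ℓ | Choosable G ℓ}

noncomputable def dynListChrom {V : Type*} [Fintype V] (G : SimpleGraph V) : ℕ :=
  sInf {ℓ | DynChoosable G ℓ}

open scoped Classical in
noncomputable def nedges {n : ℕ} (G : SimpleGraph (Fin n)) : ℕ :=
  (Finset.univ.filter (fun e : Sym2 (Fin n) => e ∈ G.edgeSet)).card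

noncomputable def gsize {n : ℕ} (G : SimpleGraph (Fin n)) : ℕ := n + nedges G

/-- `F` is hereditary: it is closed under taking subgraphs (up to isomorphism). -/
def Hereditary (F : ∀ n : ℕ, SimpleGraph (Fin n) → Prop) : Prop :=
  ∀ (n m : ℕ) (G : SimpleGraph (Fin n)) (H : SimpleGraph (Fin m)),
    F n G → (∃ f : Fin m ↪ Fin n, ∀ u v, H.Adj u v → G.Adj (f u) (f v)) → F m H

/-- `G` is dynamically `ℓ`-minimal in the class `F`. -/
def DynMinimal (F : ∀ n : ℕ, SimpleGraph (Fin n) → Prop) (ℓ : ℕ)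
    {n : ℕ} (G : SimpleGraph (Fin n)) : Prop :=
  F n G ∧ ¬ DynChoosable G ℓ ∧
    ∀ (m : ℕ) (H : SimpleGraph (Fin m)), F m H → gsize H < gsize G → DynChoosable H ℓ

open scoped Classical in
lemma deg_eq_card {V : Type*} [Fintype V] (G : SimpleGraph V) (v : V) :
    deg G v = (Finset.univ.filter (fun u => G.Adj v u)).card := rfl

/-- If `u` has degree 2 and a neighbor `v`, there is exactly one other neighbor. -/
lemma exists_other {V : Type*} [Fintype V] (G : SimpleGraph V) {u v : V}
    (h : G.Adj u v) (hd : deg G u = 2) :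
    ∃ u', G.Adj u u' ∧ u' ≠ v ∧ ∀ x, G.Adj u x → x = v ∨ x = u' := by
  classical
  have hv : v ∈ Finset.univ.filter (fun x => G.Adj u x) := by
    simp [h]
  have hcard : ((Finset.univ.filter (fun x => G.Adj u x)).erase v).card = 1 := by
    rw [Finset.card_erase_of_mem hv]
    have hrfl : (Finset.univ.filter (fun x => G.Adj u x)).card = deg G u := rfl
    omega
  obtain ⟨u', hu'⟩ := Finset.card_eq_one.mp hcard
  have hmem : u' ∈ (Finset.univ.filter (fun x => G.Adj u x)).erase v := by
    rw [hu']; exact Finset.mem_singleton_self u'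
  have h1 : u' ≠ v := (Finset.mem_erase.mp hmem).1
  have h2 : G.Adj u u' := by
    have := (Finset.mem_erase.mp hmem).2
    simpa using this
  refine ⟨u', h2, h1, fun x hx => ?_⟩
  by_cases hxv : x = v
  · exact Or.inl hxv
  · right
    have : x ∈ (Finset.univ.filter (fun y => G.Adj u y)).erase v := by
      rw [Finset.mem_erase]
      exact ⟨hxv, by simp [hx]⟩
    rw [hu'] at this
    exact Finset.mem_singleton.mp this

/-- A vertex of degree ≥ 2 with a known neighbor has another neighbor. -/
lemma exists_second {V : Type*} [Fintype V] (G : SimpleGraph V) {u v : V}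
    (h : G.Adj u v) (hd : 2 ≤ deg G u) : ∃ x, G.Adj u x ∧ x ≠ v := by
  classical
  have hv : v ∈ Finset.univ.filter (fun x => G.Adj u x) := by simp [h]
  have hcard : 1 ≤ ((Finset.univ.filter (fun x => G.Adj u x)).erase v).card := by
    rw [Finset.card_erase_of_mem hv]
    have hrfl : (Finset.univ.filter (fun x => G.Adj u x)).card = deg G u := rfl
    omega
  obtain ⟨x, hx⟩ := Finset.card_pos.mp hcard
  rw [Finset.mem_erase] at hx
  exact ⟨x, by simpa using hx.2, hx.1⟩

lemma card_three_le {x y z : ℕ} : ({x, y, z} : Finset ℕ).card ≤ 3 := by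
  refine le_trans (Finset.card_insert_le _ _) ?_
  refine Nat.succ_le_succ (le_trans (Finset.card_insert_le _ _) ?_)
  simp

lemma card_four_le {w x y z : ℕ} : ({w, x, y, z} : Finset ℕ).card ≤ 4 := by
  refine le_trans (Finset.card_insert_le _ _) (Nat.succ_le_succ card_three_le)

theorem dynMinimal_no_adjacent_two_vertices (F : ∀ n : ℕ, SimpleGraph (Fin n) → Prop)
    (hF : Hereditary F) (ℓ : ℕ) (hl : 5 ≤ ℓ) {n : ℕ} (G : SimpleGraph (Fin n))
    (hG : DynMinimal F ℓ G) :
    ∀ u v, G.Adj u v → ¬(deg G u = 2 ∧ deg G v = 2) := by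
  classical
  rintro u v huv ⟨hu, hv⟩
  have hne_uv : u ≠ v := huv.ne
  obtain ⟨u', huu', hu'v, hu'char⟩ := exists_other G huv hu
  obtain ⟨v', hvv', hv'u, hv'char⟩ := exists_other G huv.symm hv
  have hu'u : u' ≠ u := huu'.ne'
  have hv'v : v' ≠ v := hvv'.ne'
  -- the graph with all edges incident to u or v removed
  let H : SimpleGraph (Fin n) :=
    { Adj := fun x y => G.Adj x y ∧ x ≠ u ∧ x ≠ v ∧ y ≠ u ∧ y ≠ v
      symm := ⟨by rintro x y ⟨h1, h2, h3, h4, h5⟩; exact ⟨h1.symm, h4, h5, h2, h3⟩⟩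
      loopless := ⟨fun x hx => G.loopless.irrefl x hx.1⟩ }
  have hHG : ∀ x y, H.Adj x y → G.Adj x y := fun _ _ h => h.1
  have hFH : F n H :=
    hF n n G H hG.1 ⟨Function.Embedding.refl _, fun a b hab => hab.1⟩
  have hsize : gsize H < gsize G := by
    unfold gsize
    have : nedges H < nedges G := by
      unfold nedges
      apply Finset.card_lt_card
      constructor
      · intro e he
        simp only [Finset.mem_filter] at he ⊢
        refine ⟨he.1, ?_⟩
        have h2 := he.2
        induction e with
        | _ x y => exact h2.1
      · intro hcon
        have h1 : s(u, v) ∈ Finset.univ.filter (fun e : Sym2 (Fin n) => e ∈ G.edgeSet) := by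
          simp [SimpleGraph.mem_edgeSet, huv]
        have h2 := hcon h1
        simp only [Finset.mem_filter, SimpleGraph.mem_edgeSet] at h2
        exact h2.2.2.1 rfl
    omega
  have hHch : DynChoosable H ℓ := hG.2.2 n H hFH hsize
  apply hG.2.1
  intro L hL
  obtain ⟨c, hcL, hcP, hcD⟩ := hHch L hL
  -- canonical H-neighbors of u' and v' (when they exist)
  obtain ⟨wu, hwu_spec⟩ : ∃ z, (∃ w, H.Adj u' w) → H.Adj u' z := by
    by_cases h : ∃ w, H.Adj u' w
    · obtain ⟨z, hz⟩ := h; exact ⟨z, fun _ => hz⟩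
    · exact ⟨u, fun hh => absurd hh h⟩
  obtain ⟨wv, hwv_spec⟩ : ∃ z, (∃ w, H.Adj v' w) → H.Adj v' z := by
    by_cases h : ∃ w, H.Adj v' w
    · obtain ⟨z, hz⟩ := h; exact ⟨z, fun _ => hz⟩
    · exact ⟨v, fun hh => absurd hh h⟩
  -- choose new colors for v and u
  have hbex : (L v \ {c u', c v', c wv}).Nonempty := by
    rw [← Finset.card_pos]
    have h1 := Finset.le_card_sdiff ({c u', c v', c wv} : Finset ℕ) (L v)
    have h2 : ({c u', c v', c wv} : Finset ℕ).card ≤ 3 := card_three_le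
    have h3 := hL v
    omega
  obtain ⟨b, hb⟩ := hbex
  rw [Finset.mem_sdiff] at hb
  have hbL : b ∈ L v := hb.1
  have hb1 : b ≠ c u' := fun h => hb.2 (by simp [h])
  have hb2 : b ≠ c v' := fun h => hb.2 (by simp [h])
  have hb3 : b ≠ c wv := fun h => hb.2 (by simp [h])
  have haex : (L u \ {b, c u', c v', c wu}).Nonempty := by
    rw [← Finset.card_pos]
    have h1 := Finset.le_card_sdiff ({b, c u', c v', c wu} : Finset ℕ) (L u)
    have h2 : ({b, c u', c v', c wu} : Finset ℕ).card ≤ 4 := card_four_le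
    have h3 := hL u
    omega
  obtain ⟨a, ha⟩ := haex
  rw [Finset.mem_sdiff] at ha
  have haL : a ∈ L u := ha.1
  have ha0 : a ≠ b := fun h => ha.2 (by simp [h])
  have ha1 : a ≠ c u' := fun h => ha.2 (by simp [h])
  have ha2 : a ≠ c v' := fun h => ha.2 (by simp [h])
  have ha3 : a ≠ c wu := fun h => ha.2 (by simp [h])
  -- the extended coloring
  set c' : Fin n → ℕ := fun x => if x = u then a else if x = v then b else c x with hc'def
  have hc'u : c' u = a := by simp [hc'def]
  have hc'v : c' v = b := by simp [hc'def, hne_uv.symm]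
  have hc' : ∀ x, x ≠ u → x ≠ v → c' x = c x := by
    intro x h1 h2; simp [hc'def, h1, h2]
  refine ⟨c', ?_, ?_, ?_⟩
  · -- list membership
    intro x
    by_cases h1 : x = u
    · subst h1; rw [hc'u]; exact haL
    by_cases h2 : x = v
    · subst h2; rw [hc'v]; exact hbL
    rw [hc' x h1 h2]; exact hcL x
  · -- proper
    intro x y hxy
    by_cases hxu : x = u
    · rw [hxu] at hxy ⊢
      rcases hu'char y hxy with h | h <;> rw [h]
      · rw [hc'u, hc'v]; exact ha0
      · rw [hc'u, hc' u' hu'u hu'v]; exact ha1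
    by_cases hxv : x = v
    · rw [hxv] at hxy ⊢
      rcases hv'char y hxy with h | h <;> rw [h]
      · rw [hc'v, hc'u]; exact ha0.symm
      · rw [hc'v, hc' v' hv'u hv'v]; exact hb2
    by_cases hyu : y = u
    · rw [hyu] at hxy ⊢
      rcases hu'char x hxy.symm with h | h
      · exact absurd h hxv
      · rw [h, hc'u, hc' u' hu'u hu'v]; exact ha1.symm
    by_cases hyv : y = v
    · rw [hyv] at hxy ⊢
      rcases hv'char x hxy.symm with h | h
      · exact absurd h hxu
      · rw [h, hc'v, hc' v' hv'u hv'v]; exact hb2.symm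
    rw [hc' x hxu hxv, hc' y hyu hyv]
    exact hcP x y ⟨hxy, hxu, hxv, hyu, hyv⟩
  · -- dynamic
    intro w hw
    by_cases hwu2 : w = u
    · rw [hwu2]
      refine ⟨v, u', huv, huu', ?_⟩
      rw [hc'v, hc' u' hu'u hu'v]; exact hb1
    by_cases hwv2 : w = v
    · rw [hwv2]
      refine ⟨u, v', huv.symm, hvv', ?_⟩
      rw [hc'u, hc' v' hv'u hv'v]; exact ha2
    by_cases hwu' : w = u'
    · rw [hwu'] at hw ⊢
      by_cases hex : ∃ z, H.Adj u' z
      · have hz := hwu_spec hex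
        refine ⟨u, wu, huu'.symm, hz.1, ?_⟩
        rw [hc'u, hc' wu hz.2.2.2.1 hz.2.2.2.2]
        exact ha3
      · obtain ⟨x, hx, hxu⟩ := exists_second G huu'.symm hw
        have hxv : x = v := by
          by_contra hxv
          exact hex ⟨x, hx, hu'u, hu'v, hxu, hxv⟩
        rw [hxv] at hx
        refine ⟨u, v, huu'.symm, hx, ?_⟩
        rw [hc'u, hc'v]; exact ha0
    by_cases hwv' : w = v'
    · rw [hwv'] at hw ⊢
      by_cases hex : ∃ z, H.Adj v' z
      · have hz := hwv_spec hex
        refine ⟨v, wv, hvv'.symm, hz.1, ?_⟩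
        rw [hc'v, hc' wv hz.2.2.2.1 hz.2.2.2.2]
        exact hb3
      · obtain ⟨x, hx, hxv⟩ := exists_second G hvv'.symm hw
        have hxu : x = u := by
          by_contra hxu
          exact hex ⟨x, hx, hv'u, hv'v, hxu, hxv⟩
        rw [hxu] at hx
        refine ⟨v, u, hvv'.symm, hx, ?_⟩
        rw [hc'v, hc'u]; exact ha0.symm
    -- generic vertex: neighborhood untouched
    have hdegw : deg H w = deg G w := by
      rw [deg_eq_card, deg_eq_card]
      congr 1
      ext x
      simp only [Finset.mem_filter, Finset.mem_univ, true_and]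
      constructor
      · exact fun h => h.1
      · intro h
        refine ⟨h, hwu2, hwv2, ?_, ?_⟩
        · intro hxu
          subst hxu
          rcases hu'char w h.symm with rfl | rfl
          · exact hwv2 rfl
          · exact hwu' rfl
        · intro hxv
          subst hxv
          rcases hv'char w h.symm with rfl | rfl
          · exact hwu2 rfl
          · exact hwv' rfl
    obtain ⟨p, q, hp, hq, hpq⟩ := hcD w (by omega)
    refine ⟨p, q, hp.1, hq.1, ?_⟩
    rw [hc' p hp.2.2.2.1 hp.2.2.2.2, hc' q hq.2.2.2.1 hq.2.2.2.2]
    exact hpq
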